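/- Let p_1,…,p_n : ℝ^k → ℝ be twice continuously differentiable and L-positively homogeneous (L > 0), let ℓ be the exponential or logistic loss, 𝓛(W) = Σ_i ℓ(p_i(W)), and let W : [0,∞) → ℝ^k be a C¹ gradient flow with dW_t/dt = −∇𝓛(W_t) and 𝓛(W_0) < ℓ(0). Then for all t, W_t ≠ 0 and ∇𝓛(W_t) ≠ 0, so the angle θ_t between W_t and −∇𝓛(W_t) is well defined and lies in [0, π/2), and ∫_0^∞ (−ℓ'(α(W_t)))·‖W_t‖^{L−2}·tan²(θ_t) dt < ∞, where α(W) = ℓ^{−1}(𝓛(W)). -/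

import Mathlib

open Filter Set MeasureTheory
open scoped RealInnerProductSpace ENNReal



-- subadditivity of 1 - exp(-x)
theorem aux_one_sub_exp_subadd {ι : Type*} (s : Finset ι) (y : ι → ℝ)
    (hy : ∀ i ∈ s, 0 ≤ y i) :
    1 - Real.exp (-∑ i ∈ s, y i) ≤ ∑ i ∈ s, (1 - Real.exp (-y i)) := by
  induction s using Finset.cons_induction with
  | empty => simp
  | cons i s hi ih =>
    rw [Finset.sum_cons, Finset.sum_cons]
    have hyi : 0 ≤ y i := hy i (Finset.mem_cons_self _ _)
    have hS : 0 ≤ ∑ j ∈ s, y j := Finset.sum_nonneg fun j hj => hy j (Finset.mem_cons_of_mem hj)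
    have ih' := ih fun j hj => hy j (Finset.mem_cons_of_mem hj)
    have key : 1 - Real.exp (-(y i + ∑ j ∈ s, y j)) ≤
        (1 - Real.exp (-y i)) + (1 - Real.exp (-∑ j ∈ s, y j)) := by
      have h1 : Real.exp (-y i) ≤ 1 := Real.exp_le_one_iff.2 (by linarith)
      have h2 : Real.exp (-∑ j ∈ s, y j) ≤ 1 := Real.exp_le_one_iff.2 (by linarith)
      have : (1 - Real.exp (-y i)) * (1 - Real.exp (-∑ j ∈ s, y j)) ≥ 0 :=
        mul_nonneg (by linarith) (by linarith)
      have hmul : Real.exp (-(y i + ∑ j ∈ s, y j)) =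
          Real.exp (-y i) * Real.exp (-∑ j ∈ s, y j) := by
        rw [← Real.exp_add]; ring_nf
      nlinarith
    linarith

-- key algebraic inequality
theorem aux_key_ineq (L φ a β N M X : ℝ) (hL : 0 < L) (hφ : 0 < φ) (ha : 0 < a)
    (hβ : 0 < β) (hN : 0 < N) (hM : 0 < M) (hX : 0 < X)
    (h1 : L * (a * φ) ≤ β) (h2 : β ≤ N * M) :
    φ * X * ((1 - (β / (N * M)) ^ 2) / (β / (N * M)) ^ 2) * L ^ 2
      ≤ (X * N ^ 2 * M ^ 2 / φ - L * X * β * a) / a ^ 2 := by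
  have hNM : 0 < N * M := mul_pos hN hM
  have hc : (1 - (β / (N * M)) ^ 2) / (β / (N * M)) ^ 2
      = (N ^ 2 * M ^ 2 - β ^ 2) / β ^ 2 := by
    field_simp
  rw [hc]
  have hL1 : φ * X * ((N ^ 2 * M ^ 2 - β ^ 2) / β ^ 2) * L ^ 2
      = (φ * X * (N ^ 2 * M ^ 2 - β ^ 2) * L ^ 2) / β ^ 2 := by ring
  have hR1 : (X * N ^ 2 * M ^ 2 / φ - L * X * β * a) / a ^ 2
      = (X * N ^ 2 * M ^ 2 - L * X * β * a * φ) / (φ * a ^ 2) := by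
    field_simp
  rw [hL1, hR1, div_le_div_iff₀ (by positivity) (by positivity)]
  have s1 : (L * (a * φ)) * (L * (a * φ)) ≤ β * β :=
    mul_le_mul h1 h1 (by positivity) hβ.le
  have s2 : β * β ≤ (N * M) * (N * M) := mul_le_mul h2 h2 hβ.le hNM.le
  have s3 : L * β * a * φ ≤ β ^ 2 := by nlinarith
  nlinarith [mul_nonneg hX.le (sub_nonneg.2 s2), mul_nonneg (mul_nonneg hX.le (sub_nonneg.2 s2)) (sub_nonneg.2 s1), mul_nonneg (mul_nonneg hX.le hβ.le) (sub_nonneg.2 s3)]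



theorem aux_integral_step {E D h : ℝ → ℝ}
    (hE : ContinuousOn E (Ici 0))
    (hD : ContinuousOn D (Ici 0))
    (hEnn : ∀ t ∈ Ici (0:ℝ), 0 ≤ E t)
    (hED : ∀ t ∈ Ici (0:ℝ), E t ≤ D t)
    (hderiv : ∀ t ∈ Ici (0:ℝ), HasDerivAt h (-(D t)) t)
    (hh : ∀ t ∈ Ici (0:ℝ), 0 ≤ h t) :
    ∫⁻ t in Ici (0:ℝ), ENNReal.ofReal (E t) < ⊤ := by
  have hB : ∀ T : ℝ, 0 ≤ T →
      ∫⁻ t in Ioc (0:ℝ) T, ENNReal.ofReal (E t) ≤ ENNReal.ofReal (h 0) := by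
    intro T hT
    have hIcc : Icc (0:ℝ) T ⊆ Ici 0 := fun x hx => hx.1
    have hsub : Ioc (0:ℝ) T ⊆ Ici 0 := fun x hx => le_of_lt hx.1
    have hDint : IntegrableOn D (Ioc 0 T) :=
      ((hD.mono hIcc).integrableOn_Icc).mono_set Ioc_subset_Icc_self
    have step1 : ∫⁻ t in Ioc (0:ℝ) T, ENNReal.ofReal (E t)
        ≤ ∫⁻ t in Ioc (0:ℝ) T, ENNReal.ofReal (D t) := by
      refine lintegral_mono_ae ?_
      refine (ae_restrict_iff' measurableSet_Ioc).2 (ae_of_all _ fun t ht => ?_)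
      exact ENNReal.ofReal_le_ofReal (hED t (hsub ht))
    have hDnn : 0 ≤ᵐ[volume.restrict (Ioc (0:ℝ) T)] D := by
      refine (ae_restrict_iff' measurableSet_Ioc).2 (ae_of_all _ fun t ht => ?_)
      exact le_trans (hEnn t (hsub ht)) (hED t (hsub ht))
    have step2 : ∫⁻ t in Ioc (0:ℝ) T, ENNReal.ofReal (D t)
        = ENNReal.ofReal (∫ t in Ioc (0:ℝ) T, D t) :=
      (ofReal_integral_eq_lintegral_ofReal hDint hDnn).symm
    have hftc : ∫ t in (0:ℝ)..T, -D t = h T - h 0 := by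
      apply intervalIntegral.integral_eq_sub_of_hasDerivAt (f := h)
      · intro x hx
        rw [Set.uIcc_of_le hT] at hx
        exact hderiv x (hIcc hx)
      · apply ContinuousOn.intervalIntegrable
        rw [Set.uIcc_of_le hT]
        exact ((hD.mono hIcc).neg)
    have hint : ∫ t in Ioc (0:ℝ) T, D t = h 0 - h T := by
      have h2 : -∫ t in (0:ℝ)..T, D t = h T - h 0 := by
        rw [← intervalIntegral.integral_neg]; exact hftc
      rw [← intervalIntegral.integral_of_le hT]
      linarith
    have step3 : ENNReal.ofReal (∫ t in Ioc (0:ℝ) T, D t) ≤ ENNReal.ofReal (h 0) := by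
      apply ENNReal.ofReal_le_ofReal
      rw [hint]
      linarith [hh T hT]
    exact le_trans step1 (step2 ▸ step3)
  have hre : volume.restrict (Ici (0:ℝ)) = volume.restrict (Ioi (0:ℝ)) :=
    (Measure.restrict_congr_set Ioi_ae_eq_Ici).symm
  have goal2 : ∫⁻ t in Ioi (0:ℝ), ENNReal.ofReal (E t) < ⊤ := by
    set f : ℝ → ℝ≥0∞ := fun t => ENNReal.ofReal (E t) with hf
    set F : ℕ → ℝ → ℝ≥0∞ := fun m => (Ioc (0:ℝ) (m:ℝ)).indicator f with hF
    have hFmeas : ∀ m, AEMeasurable (F m) (volume.restrict (Ioi (0:ℝ))) := by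
      intro m
      rw [hF]
      rw [aemeasurable_indicator_iff measurableSet_Ioc]
      rw [Measure.restrict_restrict measurableSet_Ioc]
      rw [Set.inter_eq_self_of_subset_left (fun x hx => hx.1)]
      exact (ENNReal.measurable_ofReal.comp_aemeasurable
        ((hE.mono (fun x hx => le_of_lt hx.1)).aemeasurable measurableSet_Ioc))
    have hFmono : ∀ t, Monotone fun m => F m t := by
      intro t m1 m2 hm
      simp only [hF]
      by_cases ht : t ∈ Ioc (0:ℝ) (m1:ℝ)
      · rw [Set.indicator_of_mem ht]
        have ht2 : t ∈ Ioc (0:ℝ) (m2:ℝ) :=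
          ⟨ht.1, le_trans ht.2 (Nat.cast_le.2 hm)⟩
        rw [Set.indicator_of_mem ht2]
      · rw [Set.indicator_of_notMem ht]
        exact zero_le
    have hsup : ∀ t ∈ Ioi (0:ℝ), (⨆ m, F m t) = f t := by
      intro t ht
      apply le_antisymm
      · exact iSup_le fun m => Set.indicator_le_self _ _ t
      · have hmem : t ∈ Ioc (0:ℝ) ((Nat.ceil t : ℕ) : ℝ) := ⟨ht, Nat.le_ceil t⟩
        calc f t = F (Nat.ceil t) t := (Set.indicator_of_mem hmem f).symm
          _ ≤ ⨆ m, F m t := le_iSup (fun m => F m t) _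
    calc ∫⁻ t in Ioi (0:ℝ), f t = ∫⁻ t in Ioi (0:ℝ), ⨆ m, F m t := by
          refine lintegral_congr_ae ?_
          exact (ae_restrict_iff' measurableSet_Ioi).2
            (ae_of_all _ fun t ht => (hsup t ht).symm)
      _ = ⨆ m, ∫⁻ t in Ioi (0:ℝ), F m t :=
          lintegral_iSup' hFmeas (ae_of_all _ fun t => hFmono t)
      _ ≤ ENNReal.ofReal (h 0) := by
          refine iSup_le fun m => ?_
          simp only [hF]
          rw [lintegral_indicator measurableSet_Ioc]
          rw [Measure.restrict_restrict measurableSet_Ioc]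
          have hint : Ioc (0:ℝ) (m:ℝ) ∩ Ioi 0 = Ioc 0 (m:ℝ) :=
            Set.inter_eq_self_of_subset_left (fun x hx => hx.1)
          rw [hint]
          exact hB m (Nat.cast_nonneg m)
      _ < ⊤ := ENNReal.ofReal_lt_top
  rw [hre]
  exact goal2

theorem aux_main
    (n k : ℕ) (hn : 0 < n) (L : ℝ) (hL : 0 < L)
    (p : Fin n → EuclideanSpace ℝ (Fin k) → ℝ)
    (hp : ∀ i, ContDiff ℝ 2 (p i))
    (hhom : ∀ i (c : ℝ), 0 < c → ∀ W, p i (c • W) = c ^ L * p i W)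
    (ℓ ψ : ℝ → ℝ)
    (hsm : ContDiff ℝ 2 ℓ)
    (hd : ∀ z, HasDerivAt ℓ (deriv ℓ z) z)
    (hdc : Continuous (deriv ℓ))
    (hpos : ∀ z, 0 < ℓ z)
    (hanti : StrictAnti ℓ)
    (hd_neg : ∀ z, deriv ℓ z < 0)
    (hψ : ∀ y : ℝ, 0 < y → ℓ (ψ y) = y)
    (hψd : ∀ y : ℝ, 0 < y → HasDerivAt ψ (1 / deriv ℓ (ψ y)) y)
    (hsub : ∀ y : Fin n → ℝ, (∀ i, 0 < y i) → 0 < ∑ i, y i →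
      (- deriv ℓ (ψ (∑ i, y i))) ≤ ∑ i, (- deriv ℓ (ψ (y i))))
    (𝓛 : EuclideanSpace ℝ (Fin k) → ℝ)
    (h𝓛 : 𝓛 = fun W => ∑ i, ℓ (p i W))
    (α : EuclideanSpace ℝ (Fin k) → ℝ)
    (hα : α = fun W => Function.invFun ℓ (𝓛 W))
    (W : ℝ → EuclideanSpace ℝ (Fin k))
    (hW : ∀ t : ℝ, 0 ≤ t → HasDerivAt W (-gradient 𝓛 (W t)) t)
    (hinit : 𝓛 (W 0) < ℓ 0) :
    (∀ t : ℝ, 0 ≤ t → W t ≠ 0 ∧ gradient 𝓛 (W t) ≠ 0 ∧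
      0 < ⟪W t, -gradient 𝓛 (W t)⟫ / (‖W t‖ * ‖gradient 𝓛 (W t)‖)) ∧
    ∫⁻ t in Set.Ici (0 : ℝ),
        ENNReal.ofReal ((-deriv ℓ (α (W t))) * ‖W t‖ ^ (L - 2) *
          ((1 - (⟪W t, -gradient 𝓛 (W t)⟫ / (‖W t‖ * ‖gradient 𝓛 (W t)‖)) ^ 2) /
            (⟪W t, -gradient 𝓛 (W t)⟫ / (‖W t‖ * ‖gradient 𝓛 (W t)‖)) ^ 2)) < ⊤ := by
  haveI hne : Nonempty (Fin n) := ⟨⟨0, hn⟩⟩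
  have h𝓛c : ContDiff ℝ 2 𝓛 := by
    rw [h𝓛]; exact ContDiff.sum fun i _ => hsm.comp (hp i)
  have hFd : ∀ x, HasFDerivAt 𝓛 (fderiv ℝ 𝓛 x) x := fun x =>
    ((h𝓛c.differentiable (by norm_num)) x).hasFDerivAt
  have hgrad : ∀ x v : EuclideanSpace ℝ (Fin k), ⟪gradient 𝓛 x, v⟫ = fderiv ℝ 𝓛 x v :=
    fun x v => InnerProductSpace.toDual_symm_apply
  have hGcont : Continuous fun x => gradient 𝓛 x := by
    have e : (fun x => gradient 𝓛 x)
        = fun x => (InnerProductSpace.toDual ℝ (EuclideanSpace ℝ (Fin k))).symm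
            (fderiv ℝ 𝓛 x) := rfl
    rw [e]
    exact (LinearIsometryEquiv.continuous _).comp (h𝓛c.continuous_fderiv (by norm_num))
  have hEuler : ∀ x : EuclideanSpace ℝ (Fin k),
      fderiv ℝ 𝓛 x x = ∑ i, deriv ℓ (p i x) * (L * p i x) := by
    intro x
    have hsm1 : HasDerivAt (fun c : ℝ => c • x) x 1 := by
      simpa using (hasDerivAt_id (1:ℝ)).smul_const x
    have hFd1 : HasFDerivAt 𝓛 (fderiv ℝ 𝓛 x) ((1:ℝ) • x) := by
      rw [one_smul]; exact hFd x
    have h1 : HasDerivAt (fun c : ℝ => 𝓛 (c • x)) (fderiv ℝ 𝓛 x x) 1 := by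
      simpa [Function.comp_def] using hFd1.comp_hasDerivAt (x := (1:ℝ)) hsm1
    have h2 : HasDerivAt (fun c : ℝ => ∑ i, ℓ (c ^ L * p i x))
        (∑ i, deriv ℓ (p i x) * (L * p i x)) 1 := by
      apply HasDerivAt.fun_sum
      intro i _
      have hc : HasDerivAt (fun c : ℝ => c ^ L * p i x) (L * (1:ℝ) ^ (L - 1) * p i x) 1 :=
        (Real.hasDerivAt_rpow_const (Or.inl one_ne_zero)).mul_const _
      have hcomp := (hd ((1:ℝ) ^ L * p i x)).comp (1:ℝ) hc
      simpa [Real.one_rpow, Function.comp_def] using hcomp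
    have h3 : (fun c : ℝ => 𝓛 (c • x)) =ᶠ[nhds 1] (fun c : ℝ => ∑ i, ℓ (c ^ L * p i x)) := by
      filter_upwards [eventually_gt_nhds (by norm_num : (0:ℝ) < 1)] with c hc
      rw [h𝓛]
      exact Finset.sum_congr rfl fun i _ => by rw [hhom i c hc x]
    exact h1.unique (h2.congr_of_eventuallyEq h3)
  have hLpos : ∀ x, 0 < 𝓛 x := by
    intro x; rw [h𝓛]
    show 0 < ∑ i, ℓ (p i x)
    exact Finset.sum_pos (fun i _ => hpos _) Finset.univ_nonempty
  have hterm_le : ∀ (x) (i : Fin n), ℓ (p i x) ≤ 𝓛 x := by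
    intro x i; rw [h𝓛]
    show ℓ (p i x) ≤ ∑ j, ℓ (p j x)
    exact Finset.single_le_sum (fun j _ => (hpos (p j x)).le) (Finset.mem_univ i)
  have hpt : ∀ x : EuclideanSpace ℝ (Fin k), 𝓛 x < ℓ 0 →
      0 < ψ (𝓛 x) ∧ ℓ (ψ (𝓛 x)) = 𝓛 x ∧
      L * (ψ (𝓛 x) * (-deriv ℓ (ψ (𝓛 x)))) ≤ -fderiv ℝ 𝓛 x x := by
    intro x hx
    have h0 := hLpos x
    have hψeq : ℓ (ψ (𝓛 x)) = 𝓛 x := hψ _ h0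
    have hipos : ∀ i, 0 < p i x := fun i =>
      hanti.lt_iff_gt.1 (lt_of_le_of_lt (hterm_le x i) hx)
    have haps : 0 < ψ (𝓛 x) := hanti.lt_iff_gt.1 (by rw [hψeq]; exact hx)
    have hale : ∀ i, ψ (𝓛 x) ≤ p i x := fun i =>
      hanti.le_iff_ge.1 (by rw [hψeq]; exact hterm_le x i)
    have hψpi : ∀ i, ψ (ℓ (p i x)) = p i x := fun i =>
      hanti.injective (hψ _ (hpos _))
    have hsum0 : ∑ i, ℓ (p i x) = 𝓛 x := by rw [h𝓛]
    have hsum := hsub (fun i => ℓ (p i x)) (fun i => hpos _) (by rw [hsum0]; exact h0)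
    rw [hsum0] at hsum
    have hsum' : -deriv ℓ (ψ (𝓛 x)) ≤ ∑ i, -deriv ℓ (p i x) := by
      refine le_trans hsum (le_of_eq ?_)
      exact Finset.sum_congr rfl fun i _ => by rw [hψpi i]
    refine ⟨haps, hψeq, ?_⟩
    rw [hEuler x]
    have e1 : -∑ i, deriv ℓ (p i x) * (L * p i x)
        = L * ∑ i, (-deriv ℓ (p i x)) * p i x := by
      rw [Finset.mul_sum, ← Finset.sum_neg_distrib]
      exact Finset.sum_congr rfl fun i _ => by ring
    rw [e1]
    have step_b : ψ (𝓛 x) * ∑ i, (-deriv ℓ (p i x)) ≤ ∑ i, (-deriv ℓ (p i x)) * p i x := by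
      rw [Finset.mul_sum]
      refine Finset.sum_le_sum fun i _ => ?_
      have h1 := hale i
      have h2 : 0 < -deriv ℓ (p i x) := neg_pos.2 (hd_neg _)
      nlinarith
    have step_a : ψ (𝓛 x) * (-deriv ℓ (ψ (𝓛 x))) ≤ ψ (𝓛 x) * ∑ i, (-deriv ℓ (p i x)) :=
      mul_le_mul_of_nonneg_left hsum' haps.le
    exact mul_le_mul_of_nonneg_left (le_trans step_a step_b) hL.le
  have hgd : ∀ t : ℝ, 0 ≤ t →
      HasDerivAt (fun s => 𝓛 (W s)) (-‖gradient 𝓛 (W t)‖ ^ 2) t := by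
    intro t ht
    have h := (hFd (W t)).comp_hasDerivAt t (hW t ht)
    have hval : fderiv ℝ 𝓛 (W t) (-gradient 𝓛 (W t)) = -‖gradient 𝓛 (W t)‖ ^ 2 := by
      rw [← hgrad (W t) (-gradient 𝓛 (W t)), inner_neg_right, real_inner_self_eq_norm_sq]
    rw [hval] at h
    simpa [Function.comp_def] using h
  have hWc : ContinuousOn W (Ici 0) := fun t ht => ((hW t ht).continuousAt).continuousWithinAt
  have h𝓛Wc : ContinuousOn (fun s => 𝓛 (W s)) (Ici 0) := h𝓛c.continuous.comp_continuousOn hWc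
  have hglt : ∀ t : ℝ, 0 ≤ t → 𝓛 (W t) < ℓ 0 := by
    have hanti' : AntitoneOn (fun s => 𝓛 (W s)) (Ici 0) := by
      apply antitoneOn_of_deriv_nonpos (convex_Ici 0) h𝓛Wc
      · intro t ht
        rw [interior_Ici] at ht
        exact ((hgd t (le_of_lt ht)).differentiableAt).differentiableWithinAt
      · intro t ht
        rw [interior_Ici] at ht
        rw [(hgd t (le_of_lt ht)).deriv]
        exact neg_nonpos.2 (sq_nonneg _)
    intro t ht
    exact lt_of_le_of_lt (hanti' self_mem_Ici ht ht) hinit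
  have hβfacts : ∀ t : ℝ, 0 ≤ t →
      ⟪W t, -gradient 𝓛 (W t)⟫ = -fderiv ℝ 𝓛 (W t) (W t) ∧
      0 < -fderiv ℝ 𝓛 (W t) (W t) ∧
      W t ≠ 0 ∧ gradient 𝓛 (W t) ≠ 0 ∧
      -fderiv ℝ 𝓛 (W t) (W t) ≤ ‖W t‖ * ‖gradient 𝓛 (W t)‖ := by
    intro t ht
    obtain ⟨haps, hψeq, hkey⟩ := hpt (W t) (hglt t ht)
    have hβpos : 0 < -fderiv ℝ 𝓛 (W t) (W t) :=
      lt_of_lt_of_le (mul_pos hL (mul_pos haps (neg_pos.2 (hd_neg _)))) hkey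
    have hinner : ⟪W t, -gradient 𝓛 (W t)⟫ = -fderiv ℝ 𝓛 (W t) (W t) := by
      rw [real_inner_comm, inner_neg_left, hgrad]
    have hWne : W t ≠ 0 := by
      intro h0
      rw [h0] at hβpos
      simp at hβpos
    have hGne : gradient 𝓛 (W t) ≠ 0 := by
      intro h0
      have h2 := hβpos
      rw [← hinner, h0] at h2
      simp at h2
    refine ⟨hinner, hβpos, hWne, hGne, ?_⟩
    rw [← hinner]
    calc ⟪W t, -gradient 𝓛 (W t)⟫ ≤ ‖W t‖ * ‖-gradient 𝓛 (W t)‖ := real_inner_le_norm _ _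
      _ = ‖W t‖ * ‖gradient 𝓛 (W t)‖ := by rw [norm_neg]
  constructor
  · intro t ht
    obtain ⟨hinner, hβpos, hWne, hGne, _⟩ := hβfacts t ht
    refine ⟨hWne, hGne, ?_⟩
    rw [hinner]
    exact div_pos hβpos (mul_pos (norm_pos_iff.2 hWne) (norm_pos_iff.2 hGne))
  -- part 2
  have hαψ : ∀ t : ℝ, 0 ≤ t → α (W t) = ψ (𝓛 (W t)) := by
    intro t ht
    obtain ⟨_, hψeq, _⟩ := hpt (W t) (hglt t ht)
    rw [hα]
    show Function.invFun ℓ (𝓛 (W t)) = ψ (𝓛 (W t))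
    have hex : ∃ z, ℓ z = 𝓛 (W t) := ⟨ψ (𝓛 (W t)), hψeq⟩
    exact hanti.injective ((Function.invFun_eq hex).trans hψeq.symm)
  have hrw : ∀ t ∈ Ici (0:ℝ),
      ENNReal.ofReal ((-deriv ℓ (α (W t))) * ‖W t‖ ^ (L - 2) *
          ((1 - (⟪W t, -gradient 𝓛 (W t)⟫ / (‖W t‖ * ‖gradient 𝓛 (W t)‖)) ^ 2) /
            (⟪W t, -gradient 𝓛 (W t)⟫ / (‖W t‖ * ‖gradient 𝓛 (W t)‖)) ^ 2))
      = ENNReal.ofReal ((-deriv ℓ (ψ (𝓛 (W t)))) * ‖W t‖ ^ (L - 2) *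
          ((1 - (⟪W t, -gradient 𝓛 (W t)⟫ / (‖W t‖ * ‖gradient 𝓛 (W t)‖)) ^ 2) /
            (⟪W t, -gradient 𝓛 (W t)⟫ / (‖W t‖ * ‖gradient 𝓛 (W t)‖)) ^ 2)) :=
    fun t ht => by rw [hαψ t ht]
  rw [setLIntegral_congr_fun measurableSet_Ici hrw]
  -- continuity ingredients
  have hψC : ∀ t ∈ Ici (0:ℝ), ContinuousWithinAt (fun s => ψ (𝓛 (W s))) (Ici 0) t := by
    intro t ht
    exact ContinuousAt.comp_continuousWithinAt (f := fun s => 𝓛 (W s)) (g := ψ)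
      ((hψd _ (hLpos (W t))).continuousAt) (h𝓛Wc t ht)
  have haC : ContinuousOn (fun t => ψ (𝓛 (W t))) (Ici 0) := hψC
  have hφC : ContinuousOn (fun t => -deriv ℓ (ψ (𝓛 (W t)))) (Ici 0) :=
    (hdc.comp_continuousOn haC).neg
  have hNC : ContinuousOn (fun t => ‖W t‖) (Ici 0) := hWc.norm
  have hGC : ContinuousOn (fun t => gradient 𝓛 (W t)) (Ici 0) := hGcont.comp_continuousOn hWc
  have hMC : ContinuousOn (fun t => ‖gradient 𝓛 (W t)‖) (Ici 0) := hGC.norm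
  have hβC : ContinuousOn (fun t => -fderiv ℝ 𝓛 (W t) (W t)) (Ici 0) := by
    have hfc : Continuous fun x => fderiv ℝ 𝓛 x := h𝓛c.continuous_fderiv (by norm_num)
    exact ((hfc.comp_continuousOn hWc).clm_apply hWc).neg
  have hinnerC : ContinuousOn (fun t => ⟪W t, -gradient 𝓛 (W t)⟫) (Ici 0) :=
    hWc.inner hGC.neg
  have hXc : ContinuousOn (fun t => ‖W t‖ ^ (L - 2)) (Ici 0) := by
    intro t ht
    have hne2 : ‖W t‖ ≠ 0 := norm_ne_zero_iff.2 (hβfacts t ht).2.2.1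
    exact ContinuousAt.comp_continuousWithinAt (f := fun t => ‖W t‖)
      (g := fun y : ℝ => y ^ (L - 2))
      (Real.continuousAt_rpow_const _ _ (Or.inl hne2)) (hNC t ht)
  have hNLc : ContinuousOn (fun t => ‖W t‖ ^ L) (Ici 0) := by
    intro t ht
    have hne2 : ‖W t‖ ≠ 0 := norm_ne_zero_iff.2 (hβfacts t ht).2.2.1
    exact ContinuousAt.comp_continuousWithinAt (f := fun t => ‖W t‖)
      (g := fun y : ℝ => y ^ L)
      (Real.continuousAt_rpow_const _ _ (Or.inl hne2)) (hNC t ht)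
  have hNMne : ∀ t ∈ Ici (0:ℝ), ‖W t‖ * ‖gradient 𝓛 (W t)‖ ≠ 0 := by
    intro t ht
    obtain ⟨_, _, hWne, hGne, _⟩ := hβfacts t ht
    exact (mul_pos (norm_pos_iff.2 hWne) (norm_pos_iff.2 hGne)).ne'
  have hcospos : ∀ t ∈ Ici (0:ℝ),
      0 < ⟪W t, -gradient 𝓛 (W t)⟫ / (‖W t‖ * ‖gradient 𝓛 (W t)‖) := by
    intro t ht
    obtain ⟨hinner, hβpos, hWne, hGne, _⟩ := hβfacts t ht
    rw [hinner]
    exact div_pos hβpos (mul_pos (norm_pos_iff.2 hWne) (norm_pos_iff.2 hGne))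
  have hcosle : ∀ t ∈ Ici (0:ℝ),
      ⟪W t, -gradient 𝓛 (W t)⟫ / (‖W t‖ * ‖gradient 𝓛 (W t)‖) ≤ 1 := by
    intro t ht
    obtain ⟨hinner, hβpos, hWne, hGne, hCS⟩ := hβfacts t ht
    rw [div_le_one (mul_pos (norm_pos_iff.2 hWne) (norm_pos_iff.2 hGne))]
    rw [hinner]
    exact hCS
  have hcosC : ContinuousOn
      (fun t => ⟪W t, -gradient 𝓛 (W t)⟫ / (‖W t‖ * ‖gradient 𝓛 (W t)‖)) (Ici 0) :=
    hinnerC.div (hNC.mul hMC) hNMne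
  have hφpos : ∀ t, 0 < -deriv ℓ (ψ (𝓛 (W t))) := fun t => neg_pos.2 (hd_neg _)
  have hapos : ∀ t ∈ Ici (0:ℝ), 0 < ψ (𝓛 (W t)) :=
    fun t ht => (hpt (W t) (hglt t ht)).1
  apply aux_integral_step
    (D := fun t => (‖W t‖ ^ L * (‖gradient 𝓛 (W t)‖ ^ 2 / (-deriv ℓ (ψ (𝓛 (W t)))))
        - L * ‖W t‖ ^ (L - 2) * (-fderiv ℝ 𝓛 (W t) (W t)) * ψ (𝓛 (W t)))
        / (ψ (𝓛 (W t))) ^ 2 / L ^ 2)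
    (h := fun t => ‖W t‖ ^ L / ψ (𝓛 (W t)) / L ^ 2)
  · -- ContinuousOn E
    exact (hφC.mul hXc).mul
      (((continuousOn_const.sub (hcosC.pow 2)).div (hcosC.pow 2))
        (fun t ht => pow_ne_zero 2 (hcospos t ht).ne'))
  · -- ContinuousOn D
    refine ContinuousOn.div_const (ContinuousOn.div ?_ (haC.pow 2)
      (fun t ht => pow_ne_zero 2 (hapos t ht).ne')) _
    exact (hNLc.mul ((hMC.pow 2).div hφC (fun t ht => (hφpos t).ne')))
      |>.sub (((continuousOn_const.mul hXc).mul hβC).mul haC)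
  · -- 0 ≤ E
    intro t ht
    have h1 := hcospos t ht
    have h2 := hcosle t ht
    have h3 : 0 ≤ 1 - (⟪W t, -gradient 𝓛 (W t)⟫ / (‖W t‖ * ‖gradient 𝓛 (W t)‖)) ^ 2 := by
      nlinarith
    have h4 : (0:ℝ) ≤ ‖W t‖ ^ (L - 2) := Real.rpow_nonneg (norm_nonneg _) _
    exact mul_nonneg (mul_nonneg (hφpos t).le h4) (div_nonneg h3 (sq_nonneg _))
  · -- E ≤ D
    intro t ht
    obtain ⟨haps, hψeq, hkey⟩ := hpt (W t) (hglt t ht)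
    obtain ⟨hinner, hβpos, hWne, hGne, hCS⟩ := hβfacts t ht
    have hNpos : 0 < ‖W t‖ := norm_pos_iff.2 hWne
    have hMpos : 0 < ‖gradient 𝓛 (W t)‖ := norm_pos_iff.2 hGne
    have hXpos : 0 < ‖W t‖ ^ (L - 2) := Real.rpow_pos_of_pos hNpos _
    have hkey' := aux_key_ineq L (-deriv ℓ (ψ (𝓛 (W t)))) (ψ (𝓛 (W t)))
      (-fderiv ℝ 𝓛 (W t) (W t)) (‖W t‖) (‖gradient 𝓛 (W t)‖) (‖W t‖ ^ (L - 2))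
      hL (hφpos t) haps hβpos hNpos hMpos hXpos hkey hCS
    have hXN : ‖W t‖ ^ (L - 2) * ‖W t‖ ^ (2:ℕ) = ‖W t‖ ^ L := by
      rw [← Real.rpow_natCast (‖W t‖) 2, ← Real.rpow_add hNpos]
      norm_num
    have hDeq : (‖W t‖ ^ L * (‖gradient 𝓛 (W t)‖ ^ 2 / (-deriv ℓ (ψ (𝓛 (W t)))))
        - L * ‖W t‖ ^ (L - 2) * (-fderiv ℝ 𝓛 (W t) (W t)) * ψ (𝓛 (W t)))
        / (ψ (𝓛 (W t))) ^ 2 / L ^ 2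
        = ((‖W t‖ ^ (L - 2) * ‖W t‖ ^ 2 * ‖gradient 𝓛 (W t)‖ ^ 2 / (-deriv ℓ (ψ (𝓛 (W t))))
          - L * ‖W t‖ ^ (L - 2) * (-fderiv ℝ 𝓛 (W t) (W t)) * ψ (𝓛 (W t)))
          / (ψ (𝓛 (W t))) ^ 2) / L ^ 2 := by
      rw [hXN]
      ring
    rw [hinner, hDeq, le_div_iff₀ (by positivity : (0:ℝ) < L ^ 2)]
    calc (-deriv ℓ (ψ (𝓛 (W t)))) * ‖W t‖ ^ (L - 2) *
          ((1 - (-fderiv ℝ 𝓛 (W t) (W t) / (‖W t‖ * ‖gradient 𝓛 (W t)‖)) ^ 2) /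
            (-fderiv ℝ 𝓛 (W t) (W t) / (‖W t‖ * ‖gradient 𝓛 (W t)‖)) ^ 2) * L ^ 2
        ≤ (‖W t‖ ^ (L - 2) * ‖W t‖ ^ 2 * ‖gradient 𝓛 (W t)‖ ^ 2 / (-deriv ℓ (ψ (𝓛 (W t))))
            - L * ‖W t‖ ^ (L - 2) * (-fderiv ℝ 𝓛 (W t) (W t)) * ψ (𝓛 (W t)))
            / (ψ (𝓛 (W t))) ^ 2 := by
          refine le_trans (le_of_eq (by ring)) (le_trans hkey' (le_of_eq (by ring)))
      _ = _ := rfl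
  · -- derivative
    intro t ht
    obtain ⟨haps, hψeq, hkey⟩ := hpt (W t) (hglt t ht)
    obtain ⟨hinner, hβpos, hWne, hGne, hCS⟩ := hβfacts t ht
    have hNpos : 0 < ‖W t‖ := norm_pos_iff.2 hWne
    have hrdA : HasDerivAt (fun s => ⟪W s, W s⟫)
        (⟪W t, -gradient 𝓛 (W t)⟫ + ⟪-gradient 𝓛 (W t), W t⟫) t :=
      (hW t ht).inner ℝ (hW t ht)
    have hnormfun : (fun s : ℝ => ‖W s‖) = fun s => Real.sqrt ⟪W s, W s⟫ := by
      funext s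
      rw [real_inner_self_eq_norm_sq, Real.sqrt_sq (norm_nonneg _)]
    have hrne : ⟪W t, W t⟫ ≠ 0 := by
      rw [real_inner_self_eq_norm_sq]; positivity
    have hNd1 : HasDerivAt (fun s => ‖W s‖)
        (1 / (2 * Real.sqrt ⟪W t, W t⟫) *
          (⟪W t, -gradient 𝓛 (W t)⟫ + ⟪-gradient 𝓛 (W t), W t⟫)) t := by
      rw [hnormfun]
      simpa [Function.comp_def] using (Real.hasDerivAt_sqrt hrne).comp t hrdA
    have hNval : 1 / (2 * Real.sqrt ⟪W t, W t⟫) *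
          (⟪W t, -gradient 𝓛 (W t)⟫ + ⟪-gradient 𝓛 (W t), W t⟫)
        = -fderiv ℝ 𝓛 (W t) (W t) / ‖W t‖ := by
      have e1 : Real.sqrt ⟪W t, W t⟫ = ‖W t‖ := by
        rw [real_inner_self_eq_norm_sq, Real.sqrt_sq (norm_nonneg _)]
      have e2 : ⟪-gradient 𝓛 (W t), W t⟫ = ⟪W t, -gradient 𝓛 (W t)⟫ := real_inner_comm _ _
      rw [e1, e2, hinner]
      field_simp
      ring
    rw [hNval] at hNd1
    have hu : HasDerivAt (fun s => ‖W s‖ ^ L)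
        (L * ‖W t‖ ^ (L - 2) * (-fderiv ℝ 𝓛 (W t) (W t))) t := by
      have h1 := (Real.hasDerivAt_rpow_const (p := L) (Or.inl hNpos.ne')).comp t hNd1
      have e : L * ‖W t‖ ^ (L - 1) * (-fderiv ℝ 𝓛 (W t) (W t) / ‖W t‖)
          = L * ‖W t‖ ^ (L - 2) * (-fderiv ℝ 𝓛 (W t) (W t)) := by
        have e2 : ‖W t‖ ^ (L - 1) / ‖W t‖ = ‖W t‖ ^ (L - 2) := by
          have e3 := Real.rpow_sub hNpos (L - 1) 1
          rw [Real.rpow_one] at e3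
          rw [← e3]
          ring_nf
        rw [← e2]
        ring
      rw [e] at h1
      simpa [Function.comp_def] using h1
    have hdne : deriv ℓ (ψ (𝓛 (W t))) ≠ 0 := (hd_neg _).ne
    have hv : HasDerivAt (fun s => ψ (𝓛 (W s)))
        (‖gradient 𝓛 (W t)‖ ^ 2 / (-deriv ℓ (ψ (𝓛 (W t))))) t := by
      have h1 := (hψd (𝓛 (W t)) (hLpos (W t))).comp t (hgd t ht)
      have e : 1 / deriv ℓ (ψ (𝓛 (W t))) * -‖gradient 𝓛 (W t)‖ ^ 2
          = ‖gradient 𝓛 (W t)‖ ^ 2 / (-deriv ℓ (ψ (𝓛 (W t)))) := by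
        rw [eq_div_iff (neg_ne_zero.2 hdne)]
        field_simp
      rw [e] at h1
      simpa [Function.comp_def] using h1
    have hq := (hu.div hv haps.ne').div_const (L ^ 2)
    have efin : (L * ‖W t‖ ^ (L - 2) * (-fderiv ℝ 𝓛 (W t) (W t)) * ψ (𝓛 (W t))
        - ‖W t‖ ^ L * (‖gradient 𝓛 (W t)‖ ^ 2 / (-deriv ℓ (ψ (𝓛 (W t))))))
        / (ψ (𝓛 (W t))) ^ 2 / L ^ 2
        = -((‖W t‖ ^ L * (‖gradient 𝓛 (W t)‖ ^ 2 / (-deriv ℓ (ψ (𝓛 (W t)))))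
          - L * ‖W t‖ ^ (L - 2) * (-fderiv ℝ 𝓛 (W t) (W t)) * ψ (𝓛 (W t)))
          / (ψ (𝓛 (W t))) ^ 2 / L ^ 2) := by
      ring
    rw [efin] at hq
    exact hq
  · -- 0 ≤ h
    intro t ht
    have h1 := hapos t ht
    have h2 : (0:ℝ) ≤ ‖W t‖ ^ L := Real.rpow_nonneg (norm_nonneg _) _
    exact div_nonneg (div_nonneg h2 h1.le) (by positivity)

section ExpProps

theorem exp_hd0 (z : ℝ) : HasDerivAt (fun z => Real.exp (-z)) (-Real.exp (-z)) z := by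
  simpa [Function.comp_def] using (Real.hasDerivAt_exp (-z)).comp z ((hasDerivAt_id z).neg)

theorem exp_hde : deriv (fun z => Real.exp (-z)) = fun z => -Real.exp (-z) :=
  funext fun z => (exp_hd0 z).deriv

theorem log_hd0 (z : ℝ) : HasDerivAt (fun z => Real.log (1 + Real.exp (-z)))
    ((1 + Real.exp (-z))⁻¹ * -Real.exp (-z)) z := by
  have h1p : (0:ℝ) < 1 + Real.exp (-z) := by positivity
  have he : HasDerivAt (fun z : ℝ => 1 + Real.exp (-z)) (-Real.exp (-z)) z := by
    simpa using ((Real.hasDerivAt_exp (-z)).comp z ((hasDerivAt_id z).neg)).const_add 1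
  simpa [Function.comp_def] using (Real.hasDerivAt_log h1p.ne').comp z he

theorem log_hde : deriv (fun z => Real.log (1 + Real.exp (-z)))
    = fun z => (1 + Real.exp (-z))⁻¹ * -Real.exp (-z) :=
  funext fun z => (log_hd0 z).deriv

theorem exp_sub_one_pos {y : ℝ} (hy : 0 < y) : 0 < Real.exp y - 1 :=
  sub_pos.2 (Real.one_lt_exp_iff.2 hy)

end ExpProps

theorem statement_13
    (n k : ℕ) (hn : 0 < n) (L : ℝ) (hL : 0 < L)
    (p : Fin n → EuclideanSpace ℝ (Fin k) → ℝ)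
    (hp : ∀ i, ContDiff ℝ 2 (p i))
    (hhom : ∀ i (c : ℝ), 0 < c → ∀ W, p i (c • W) = c ^ L * p i W)
    (ℓ : ℝ → ℝ)
    (hℓ : ℓ = (fun z => Real.exp (-z)) ∨ ℓ = fun z => Real.log (1 + Real.exp (-z)))
    (𝓛 : EuclideanSpace ℝ (Fin k) → ℝ)
    (h𝓛 : 𝓛 = fun W => ∑ i, ℓ (p i W))
    (α : EuclideanSpace ℝ (Fin k) → ℝ)
    (hα : α = fun W => Function.invFun ℓ (𝓛 W))
    (W : ℝ → EuclideanSpace ℝ (Fin k))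
    (hW : ∀ t : ℝ, 0 ≤ t → HasDerivAt W (-gradient 𝓛 (W t)) t)
    (hinit : 𝓛 (W 0) < ℓ 0) :
    (∀ t : ℝ, 0 ≤ t → W t ≠ 0 ∧ gradient 𝓛 (W t) ≠ 0 ∧
      0 < ⟪W t, -gradient 𝓛 (W t)⟫ / (‖W t‖ * ‖gradient 𝓛 (W t)‖)) ∧
    ∫⁻ t in Set.Ici (0 : ℝ),
        ENNReal.ofReal ((-deriv ℓ (α (W t))) * ‖W t‖ ^ (L - 2) *
          ((1 - (⟪W t, -gradient 𝓛 (W t)⟫ / (‖W t‖ * ‖gradient 𝓛 (W t)‖)) ^ 2) /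
            (⟪W t, -gradient 𝓛 (W t)⟫ / (‖W t‖ * ‖gradient 𝓛 (W t)‖)) ^ 2)) < ⊤ := by
  rcases hℓ with hc | hc
  · subst hc
    refine aux_main n k hn L hL p hp hhom (fun z => Real.exp (-z)) (fun y => -Real.log y)
      ((Real.contDiff_exp.comp contDiff_neg).of_le le_top)
      (fun z => by rw [exp_hde]; exact exp_hd0 z)
      (by rw [exp_hde]; exact (Real.continuous_exp.comp continuous_neg).neg)
      (fun z => Real.exp_pos _)
      (fun a b hab => Real.exp_lt_exp.2 (neg_lt_neg hab))
      (fun z => by rw [exp_hde]; exact neg_neg_iff_pos.2 (Real.exp_pos _))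
      (fun y hy => by simp [Real.exp_log hy])
      (fun y hy => ?_) (fun y hy hsum => ?_) 𝓛 h𝓛 α hα W hW hinit
    · have h1 : HasDerivAt (fun y : ℝ => -Real.log y) (-(y⁻¹)) y :=
        (Real.hasDerivAt_log hy.ne').neg
      have e : (1 : ℝ) / deriv (fun z => Real.exp (-z)) (-Real.log y) = -(y⁻¹) := by
        rw [exp_hde]
        simp [Real.exp_log hy, inv_neg]
      show HasDerivAt (fun y : ℝ => -Real.log y)
        ((1 : ℝ) / deriv (fun z => Real.exp (-z)) (-Real.log y)) y
      rw [e]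
      exact h1
    · have key : ∀ s : ℝ, 0 < s → -deriv (fun z => Real.exp (-z)) (-Real.log s) = s := by
        intro s hs
        rw [exp_hde]
        simp [Real.exp_log hs]
      show -deriv (fun z => Real.exp (-z)) (-Real.log (∑ i, y i))
        ≤ ∑ i, -deriv (fun z => Real.exp (-z)) (-Real.log (y i))
      calc -deriv (fun z => Real.exp (-z)) (-Real.log (∑ i, y i)) = ∑ i, y i := key _ hsum
        _ = ∑ i, -deriv (fun z => Real.exp (-z)) (-Real.log (y i)) :=
            Finset.sum_congr rfl fun i _ => (key _ (hy i)).symm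
        _ ≤ _ := le_refl _
  · subst hc
    have h1p : ∀ z : ℝ, (0:ℝ) < 1 + Real.exp (-z) := fun z => by positivity
    have key : ∀ s : ℝ, 0 < s →
        -deriv (fun z => Real.log (1 + Real.exp (-z))) (-Real.log (Real.exp s - 1))
          = 1 - Real.exp (-s) := by
      intro s hs
      rw [log_hde]
      simp only [neg_neg, Real.exp_log (exp_sub_one_pos hs)]
      rw [show (1:ℝ) + (Real.exp s - 1) = Real.exp s by ring, Real.exp_neg]
      have hes : Real.exp s ≠ 0 := (Real.exp_pos s).ne'
      field_simp
    refine aux_main n k hn L hL p hp hhom (fun z => Real.log (1 + Real.exp (-z))) (fun y => -Real.log (Real.exp y - 1))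
      ((ContDiff.log (contDiff_const.add (Real.contDiff_exp.comp contDiff_neg))
        (fun z => (h1p z).ne')).of_le le_top)
      (fun z => by rw [log_hde]; exact log_hd0 z)
      (by rw [log_hde]
          exact (continuous_const.add (Real.continuous_exp.comp continuous_neg)).inv₀
            (fun z => (h1p z).ne') |>.mul (Real.continuous_exp.comp continuous_neg).neg)
      (fun z => Real.log_pos (by have := Real.exp_pos (-z); linarith))
      (fun a b hab => by
        have : Real.exp (-b) < Real.exp (-a) := Real.exp_lt_exp.2 (neg_lt_neg hab)
        exact Real.log_lt_log (h1p b) (by linarith))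
      (fun z => by
        rw [log_hde]
        have h2 := Real.exp_pos (-z)
        have h3 := h1p z
        exact mul_neg_of_pos_of_neg (by positivity) (by linarith))
      (fun y hy => by
        show Real.log (1 + Real.exp (-(-Real.log (Real.exp y - 1)))) = y
        rw [neg_neg, Real.exp_log (exp_sub_one_pos hy),
          show (1:ℝ) + (Real.exp y - 1) = Real.exp y by ring, Real.log_exp])
      (fun y hy => ?_) (fun y hy hsum => ?_) 𝓛 h𝓛 α hα W hW hinit
    · have hgt := exp_sub_one_pos hy
      have h1 : HasDerivAt (fun y : ℝ => Real.exp y - 1) (Real.exp y) y :=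
        (Real.hasDerivAt_exp y).sub_const 1
      have h2 := ((Real.hasDerivAt_log hgt.ne').comp y h1).neg
      have e : (1:ℝ) / deriv (fun z => Real.log (1 + Real.exp (-z))) (-Real.log (Real.exp y - 1))
          = -((Real.exp y - 1)⁻¹ * Real.exp y) := by
        rw [log_hde]
        simp only [neg_neg, Real.exp_log hgt]
        rw [show (1:ℝ) + (Real.exp y - 1) = Real.exp y by ring]
        have hes : Real.exp y ≠ 0 := (Real.exp_pos y).ne'
        field_simp
      show HasDerivAt (fun y : ℝ => -Real.log (Real.exp y - 1))
        ((1:ℝ) / deriv (fun z => Real.log (1 + Real.exp (-z))) (-Real.log (Real.exp y - 1))) y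
      rw [e]
      exact h2
    · show -deriv (fun z => Real.log (1 + Real.exp (-z))) (-Real.log (Real.exp (∑ i, y i) - 1))
        ≤ ∑ i, -deriv (fun z => Real.log (1 + Real.exp (-z))) (-Real.log (Real.exp (y i) - 1))
      rw [key _ hsum]
      rw [Finset.sum_congr rfl (fun i _ => key _ (hy i))]
      exact aux_one_sub_exp_subadd Finset.univ y (fun i _ => (hy i).le)
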